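/- Let S be a monoid acting on a compact topological space X such that for each s ∈ S the translation x ↦ s·x is continuous, and let f : X → ℝ be continuous. Then the family fS := {x ↦ f(s·x) : s ∈ S} contains no independent sequence if and only if for every countably infinite subset A ⊆ S there exists a countably infinite subset A' ⊆ A such that the pseudometric ρ_{f,A'}(x, y) := sup_{g ∈ A'} |f(g·x) − f(g·y)| on X is separable. -/

import Mathlib

/-- A sequence `(f n)` of real-valued functions on `Z` is *independent* if there are
reals `a < b` such that for all disjoint finite sets `P, M ⊆ ℕ` the set
`⋂_{n ∈ P} {f n < a} ∩ ⋂_{n ∈ M} {f n > b}` is nonempty. -/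
def IsIndependentSeq {Z : Type*} (f : ℕ → Z → ℝ) : Prop :=
  ∃ a b : ℝ, a < b ∧ ∀ P M : Finset ℕ, Disjoint P M →
    ((⋂ n ∈ P, {z | f n z < a}) ∩ ⋂ n ∈ M, {z | b < f n z}).Nonempty

open Classical

namespace GPX

/-- minimum of a nonempty set of naturals -/
lemma nat_set_min {N : Set ℕ} (h : N.Nonempty) : ∃ p ∈ N, ∀ q ∈ N, p ≤ q := by
  classical
  obtain ⟨n, hn⟩ := h
  exact ⟨Nat.find ⟨n, hn⟩, Nat.find_spec ⟨n, hn⟩, fun q hq => Nat.find_min' _ hq⟩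

lemma infinite_above {P : Set ℕ} (h : P.Infinite) (n : ℕ) : {x ∈ P | n < x}.Infinite := by
  have : P \ {x | x ≤ n} ⊆ {x ∈ P | n < x} := by
    intro x hx; exact ⟨hx.1, not_le.mp hx.2⟩
  exact (h.diff (Set.finite_le_nat n)).mono this

/-- a strictly monotone selection through a sequence of infinite sets -/
lemma exists_seq_mem (C : ℕ → Set ℕ) (hC : ∀ r, (C r).Infinite) :
    ∃ w : ℕ → ℕ, StrictMono w ∧ ∀ r, w r ∈ C r := by
  have step : ∀ r v : ℕ, ∃ u, u ∈ C r ∧ v < u := by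
    intro r v
    obtain ⟨u, hu1, hu2⟩ := (infinite_above (hC r) v).nonempty
    exact ⟨u, hu1, hu2⟩
  choose u hu1 hu2 using step
  refine ⟨fun n => Nat.rec (u 0 0) (fun r prev => u (r + 1) prev) n,
    strictMono_nat_of_lt_succ (fun n => hu2 _ _), fun r => ?_⟩
  cases r with
  | zero => exact hu1 0 0
  | succ r => exact hu1 _ _

/-- `t` is an initial segment of `N`. -/
def IsInit (t : Finset ℕ) (N : Set ℕ) : Prop :=
  ↑t ⊆ N ∧ ∀ a ∈ N, ∀ b ∈ t, a ≤ b → a ∈ t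

variable (F : Set (Finset ℕ))

def Accepts (M : Set ℕ) (s : Finset ℕ) : Prop :=
  ∀ N : Set ℕ, N ⊆ M → N.Infinite → (∀ n ∈ N, ∀ m ∈ s, m < n) →
    ∃ t : Finset ℕ, IsInit t N ∧ s ∪ t ∈ F

def Rejects (M : Set ℕ) (s : Finset ℕ) : Prop :=
  ∀ N : Set ℕ, N ⊆ M → N.Infinite → ¬ Accepts F N s

variable {F}

lemma accepts_mono {M N : Set ℕ} {s : Finset ℕ} (h : N ⊆ M) (ha : Accepts F M s) :
    Accepts F N s := fun N' h1 h2 h3 => ha N' (h1.trans h) h2 h3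

lemma rejects_mono {M N : Set ℕ} {s : Finset ℕ} (h : N ⊆ M) (hr : Rejects F M s) :
    Rejects F N s := fun Z h1 => hr Z (h1.trans h)

lemma accepts_of_mem {M : Set ℕ} {s : Finset ℕ} (hs : s ∈ F) : Accepts F M s :=
  fun N _ _ _ => ⟨∅, ⟨by simp, by simp⟩, by simpa using hs⟩

lemma rejects_extend {M : Set ℕ} (hM : M.Infinite) {s : Finset ℕ} (hr : Rejects F M s) :
    ∃ N, N ⊆ M ∧ N.Infinite ∧ (∀ n ∈ N, ∀ m ∈ s, m < n) ∧
      ∀ n ∈ N, Rejects F N (insert n s) := by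
  classical
  -- the guarded part of M
  set Mg : Set ℕ := {x ∈ M | ∀ m ∈ s, m < x} with hMgdef
  have hMg : Mg.Infinite := by
    have hfin : {x : ℕ | ∃ m ∈ s, x ≤ m}.Finite := by
      have : {x : ℕ | ∃ m ∈ s, x ≤ m} ⊆ ⋃ m ∈ (s : Finset ℕ), Set.Iic m := by
        intro x ⟨m, hm, hx⟩; exact Set.mem_biUnion hm hx
      exact (Set.Finite.biUnion s.finite_toSet (fun m _ => Set.finite_Iic m)).subset this
    have : M \ {x : ℕ | ∃ m ∈ s, x ≤ m} ⊆ Mg := by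
      intro x hx
      refine ⟨hx.1, fun m hm => ?_⟩
      by_contra h
      exact hx.2 ⟨m, hm, Nat.le_of_not_lt h⟩
    exact ((hM.diff hfin).mono this)
  have hMgM : Mg ⊆ M := fun x hx => hx.1
  -- one step of the construction
  have hstep : ∀ st : {P : Set ℕ // P.Infinite ∧ P ⊆ Mg},
      ∃ q : ℕ × {P : Set ℕ // P.Infinite ∧ P ⊆ Mg},
        q.1 ∈ st.1 ∧ (q.2.1 : Set ℕ) ⊆ {x ∈ st.1 | q.1 < x} ∧
          (Accepts F q.2.1 (insert q.1 s) ∨ Rejects F q.2.1 (insert q.1 s)) := by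
    rintro ⟨P, hPinf, hPg⟩
    obtain ⟨n, hn⟩ := hPinf.nonempty
    have hR : {x ∈ P | n < x}.Infinite := infinite_above hPinf n
    have hRg : {x ∈ P | n < x} ⊆ Mg := fun x hx => hPg hx.1
    by_cases hA : ∃ Z, Z ⊆ {x ∈ P | n < x} ∧ Z.Infinite ∧ Accepts F Z (insert n s)
    · obtain ⟨Z, hZ1, hZ2, hZ3⟩ := hA
      exact ⟨(n, ⟨Z, hZ2, hZ1.trans hRg⟩), hn, hZ1, Or.inl hZ3⟩
    · refine ⟨(n, ⟨{x ∈ P | n < x}, hR, hRg⟩), hn, subset_rfl, Or.inr ?_⟩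
      intro Z h1 h2 hacc
      exact hA ⟨Z, h1, h2, hacc⟩
  choose φ hφ1 hφ2 hφ3 using hstep
  set st : ℕ → {P : Set ℕ // P.Infinite ∧ P ⊆ Mg} :=
    fun k => Nat.rec ⟨Mg, hMg, subset_rfl⟩ (fun _ p => (φ p).2) k with hstdef
  set n : ℕ → ℕ := fun k => (φ (st k)).1 with hndef
  have hsucc : ∀ k, (st (k+1)).1 ⊆ {x ∈ (st k).1 | n k < x} := fun k => hφ2 (st k)
  have hmem : ∀ k, n k ∈ (st k).1 := fun k => hφ1 (st k)
  have hsub1 : ∀ k, (st (k+1)).1 ⊆ (st k).1 := fun k x hx => ((hsucc k) hx).1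
  have hmono : ∀ {j k : ℕ}, k ≤ j → (st j).1 ⊆ (st k).1 := by
    intro j k h
    induction j with
    | zero => cases Nat.le_zero.mp h; exact subset_rfl
    | succ j ih =>
      rcases Nat.lt_or_ge k (j+1) with hlt | hge
      · exact (hsub1 j).trans (ih (Nat.lt_succ_iff.mp hlt))
      · cases le_antisymm h hge; exact subset_rfl
  have hnmono : StrictMono n := by
    apply strictMono_nat_of_lt_succ
    intro k
    exact ((hsucc k) (hmem (k+1))).2
  have hdec : ∀ k, Accepts F (st (k+1)).1 (insert (n k) s) ∨
      Rejects F (st (k+1)).1 (insert (n k) s) := fun k => hφ3 (st k)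
  by_cases hinf : {k | Accepts F (st (k+1)).1 (insert (n k) s)}.Infinite
  · -- contradiction with `Rejects F M s`
    exfalso
    set NA : Set ℕ := n '' {k | Accepts F (st (k+1)).1 (insert (n k) s)} with hNAdef
    have hNAM : NA ⊆ M := by
      rintro _ ⟨k, _, rfl⟩; exact hMgM ((st k).2.2 (hmem k))
    have hNAinf : NA.Infinite := hinf.image (hnmono.injective.injOn)
    refine hr NA hNAM hNAinf ?_
    intro N hN hNinf hg
    obtain ⟨p, hpN, hpmin⟩ := nat_set_min hNinf.nonempty
    obtain ⟨k, hkA, hkp⟩ := hN hpN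
    have hN' : N \ {p} ⊆ (st (k+1)).1 := by
      intro q hq
      obtain ⟨j, hjA, hjq⟩ := hN hq.1
      have : p < q := lt_of_le_of_ne (hpmin q hq.1) (fun h => hq.2 h.symm)
      have : k < j := by
        by_contra h
        have := hnmono.le_iff_le.mpr (Nat.le_of_not_lt h)
        rw [hjq, hkp] at this
        omega
      exact hmono this (hjq ▸ hmem j)
    have hN'inf : (N \ {p}).Infinite := hNinf.diff (Set.finite_singleton p)
    have hguard : ∀ q ∈ N \ {p}, ∀ m ∈ insert (n k) s, m < q := by
      intro q hq m hm
      rcases Finset.mem_insert.mp hm with rfl | hm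
      · rw [hkp]; exact lt_of_le_of_ne (hpmin q hq.1) (fun h => hq.2 h.symm)
      · exact hg q hq.1 m hm
    obtain ⟨t', ⟨ht'sub, ht'dc⟩, ht'F⟩ := hkA (N \ {p}) hN' hN'inf hguard
    refine ⟨insert p t', ⟨?_, ?_⟩, ?_⟩
    · intro x hx
      rcases Finset.mem_insert.mp hx with rfl | hx
      · exact hpN
      · exact (ht'sub hx).1
    · intro x hxN b hb hxb
      rcases Finset.mem_insert.mp hb with hbp | hb
      · rcases eq_or_ne x p with rfl | hne
        · exact Finset.mem_insert_self _ _
        · exact absurd (lt_of_le_of_ne (hpmin x hxN) (Ne.symm hne))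
            (not_lt.mpr (hbp ▸ hxb))
      · rcases eq_or_ne x p with rfl | hne
        · exact Finset.mem_insert_self _ _
        · exact Finset.mem_insert_of_mem
            (ht'dc x ⟨hxN, by simp [hne]⟩ b hb hxb)
    · have : s ∪ insert p t' = insert (n k) s ∪ t' := by
        rw [hkp]; ext z; simp only [Finset.mem_union, Finset.mem_insert]; tauto
      rw [this]; exact ht'F
  · -- eventually every step rejects
    rw [Set.not_infinite] at hinf
    obtain ⟨k₀, hk₀'⟩ := hinf.bddAbove
    have hk₀ : ∀ k ∈ {k | Accepts F (st (k+1)).1 (insert (n k) s)}, k ≤ k₀ :=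
      fun k hk => hk₀' hk
    set N : Set ℕ := n '' {k | k₀ + 1 ≤ k} with hNdef
    have hNg : N ⊆ Mg := by rintro _ ⟨k, _, rfl⟩; exact (st k).2.2 (hmem k)
    refine ⟨N, hNg.trans hMgM, ?_, ?_, ?_⟩
    · exact (Set.Ici_infinite (k₀ + 1)).image (hnmono.injective.injOn)
    · intro q hq m hm
      exact (hNg hq).2 m hm
    · rintro _ ⟨k, hk, rfl⟩
      have hkrej : Rejects F (st (k+1)).1 (insert (n k) s) := by
        rcases hdec k with hacc | hrej
        · exfalso; have h1 := hk₀ k hacc; have h2 : k₀ + 1 ≤ k := hk; omega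
        · exact hrej
      intro Z hZ hZinf hZacc
      have hZ' : (Z \ (n '' Set.Iic k)).Infinite :=
        hZinf.diff ((Set.finite_Iic k).image n)
      have hZ'sub : Z \ (n '' Set.Iic k) ⊆ (st (k+1)).1 := by
        intro q hq
        obtain ⟨j, hj, hjq⟩ := hZ hq.1
        have : k < j := by
          by_contra h
          exact hq.2 ⟨j, Nat.le_of_not_lt h, hjq⟩
        exact hmono this (hjq ▸ hmem j)
      exact hkrej _ hZ'sub hZ' (accepts_mono Set.diff_subset hZacc)

lemma rejects_shrink (S : Finset (Finset ℕ)) {P : Set ℕ} (hP : P.Infinite)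
    (h : ∀ s ∈ S, Rejects F P s) :
    ∃ Q, Q ⊆ P ∧ Q.Infinite ∧ (∀ s ∈ S, Rejects F Q s) ∧
      ∀ s ∈ S, ∀ n ∈ Q, (∀ m ∈ s, m < n) → Rejects F Q (insert n s) := by
  classical
  induction S using Finset.induction generalizing P with
  | empty => exact ⟨P, subset_rfl, hP, by simp, by simp⟩
  | @insert s₀ S' hs₀ ih =>
    obtain ⟨Q', hQ'P, hQ'inf, hQ'rej, hQ'ins⟩ := ih hP (fun s hs => h s (Finset.mem_insert_of_mem hs))
    have hrs₀ : Rejects F Q' s₀ := rejects_mono hQ'P (h s₀ (Finset.mem_insert_self _ _))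
    obtain ⟨N, hNQ', hNinf, _, hNins⟩ := rejects_extend hQ'inf hrs₀
    refine ⟨N, hNQ'.trans hQ'P, hNinf, ?_, ?_⟩
    · intro s hs
      rcases Finset.mem_insert.mp hs with rfl | hs
      · exact rejects_mono hNQ' hrs₀
      · exact rejects_mono hNQ' (hQ'rej s hs)
    · intro s hs q hq hguard
      rcases Finset.mem_insert.mp hs with rfl | hs
      · exact hNins q hq
      · exact rejects_mono hNQ' (hQ'ins s hs q (hNQ' hq) hguard)

theorem dichotomy (F : Set (Finset ℕ)) (M₀ : Set ℕ) (hM₀ : M₀.Infinite) :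
    (∃ M, M ⊆ M₀ ∧ M.Infinite ∧ ∀ N, N ⊆ M → N.Infinite → ∃ t, IsInit t N ∧ t ∈ F) ∨
    (∃ M, M ⊆ M₀ ∧ M.Infinite ∧ ∀ t : Finset ℕ, ↑t ⊆ M → t ∉ F) := by
  classical
  by_cases hacc : ∃ N, N ⊆ M₀ ∧ N.Infinite ∧ Accepts F N ∅
  · left
    obtain ⟨N, h1, h2, h3⟩ := hacc
    refine ⟨N, h1, h2, fun N' hs hinf => ?_⟩
    obtain ⟨t, ht1, ht2⟩ := h3 N' hs hinf (by simp)
    exact ⟨t, ht1, by simpa using ht2⟩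
  · right
    have hrej : Rejects F M₀ ∅ := fun N h1 h2 ha => hacc ⟨N, h1, h2, ha⟩
    -- the state: a finite set of chosen elements plus a current infinite set
    set Good : Finset ℕ × Set ℕ → Prop := fun q =>
      q.2.Infinite ∧ q.2 ⊆ M₀ ∧ (↑q.1 ⊆ M₀) ∧ (∀ d ∈ q.1, ∀ p ∈ q.2, d < p) ∧
        ∀ s ∈ q.1.powerset, Rejects F q.2 s with hGood
    have hstep : ∀ st : {q // Good q}, ∃ st' : {q // Good q},
        st.1.1 ⊆ st'.1.1 ∧ st.1.1.card < st'.1.1.card ∧ st'.1.2 ⊆ st.1.2 := by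
      rintro ⟨⟨D, P⟩, hPinf, hPM, hDM, hDP, hrejs⟩
      obtain ⟨Q, hQP, hQinf, hQrej, hQins⟩ := rejects_shrink D.powerset hPinf hrejs
      obtain ⟨n₀, hn₀Q, hn₀min⟩ := nat_set_min hQinf.nonempty
      have hn₀D : n₀ ∉ D := fun h => lt_irrefl n₀ (hDP n₀ h n₀ (hQP hn₀Q))
      refine ⟨⟨⟨insert n₀ D, {x ∈ Q | n₀ < x}⟩, infinite_above hQinf n₀,
        fun x hx => hPM (hQP hx.1), ?_, ?_, ?_⟩, ?_, ?_, ?_⟩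
      · intro x hx
        rcases Finset.mem_insert.mp hx with rfl | hx
        · exact hPM (hQP hn₀Q)
        · exact hDM hx
      · intro d hd p hp
        rcases Finset.mem_insert.mp hd with rfl | hd
        · exact hp.2
        · exact hDP d hd p (hQP hp.1)
      · intro s hs
        rcases Finset.mem_powerset.mp hs with hsub
        by_cases hn₀s : n₀ ∈ s
        · have hs' : s.erase n₀ ∈ D.powerset := by
            rw [Finset.mem_powerset]
            intro x hx
            rcases Finset.mem_insert.mp (hsub (Finset.mem_of_mem_erase hx)) with rfl | h
            · exact absurd rfl (Finset.ne_of_mem_erase hx)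
            · exact h
          have hguard : ∀ m ∈ s.erase n₀, m < n₀ := by
            intro m hm
            rcases Finset.mem_insert.mp (hsub (Finset.mem_of_mem_erase hm)) with rfl | h
            · exact absurd rfl (Finset.ne_of_mem_erase hm)
            · exact hDP m h n₀ (hQP hn₀Q)
          have := hQins (s.erase n₀) hs' n₀ hn₀Q hguard
          rw [Finset.insert_erase hn₀s] at this
          exact rejects_mono (fun x hx => hx.1) this
        · have hs' : s ∈ D.powerset := by
            rw [Finset.mem_powerset]
            intro x hx
            rcases Finset.mem_insert.mp (hsub hx) with rfl | h
            · exact absurd hx hn₀s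
            · exact h
          exact rejects_mono (fun x hx => hx.1) (hQrej s hs')
      · exact Finset.subset_insert _ _
      · show D.card < (insert n₀ D).card
        rw [Finset.card_insert_of_notMem hn₀D]; omega
      · exact fun x hx => hQP hx.1
    choose next h1 h2 h3 using hstep
    have hG0 : Good (∅, M₀) := by
      refine ⟨hM₀, subset_rfl, by simp, by simp, ?_⟩
      intro s hs
      rw [Finset.mem_powerset, Finset.subset_empty] at hs
      subst hs; exact hrej
    set st : ℕ → {q // Good q} := fun k => Nat.rec ⟨(∅, M₀), hG0⟩ (fun _ p => next p) k with hstdef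
    have hDsub : ∀ {j k}, j ≤ k → (st j).1.1 ⊆ (st k).1.1 := by
      intro j k h
      induction k with
      | zero => cases Nat.le_zero.mp h; exact subset_rfl
      | succ k ih =>
        rcases Nat.lt_or_ge j (k+1) with hlt | hge
        · exact (ih (Nat.lt_succ_iff.mp hlt)).trans (h1 (st k))
        · cases le_antisymm h hge; exact subset_rfl
    have hcard : ∀ k, k ≤ (st k).1.1.card := by
      intro k
      induction k with
      | zero => omega
      | succ k ih =>
        have h := h2 (st k)
        have heq : (st (k+1)).1.1.card = (next (st k)).1.1.card := rfl
        omega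
    set M : Set ℕ := ⋃ k, ((st k).1.1 : Set ℕ) with hMdef
    have hMM₀ : M ⊆ M₀ := by
      rintro x hx
      obtain ⟨s, ⟨k, rfl⟩, hxs⟩ := hx
      exact (st k).2.2.2.1 hxs
    have hMinf : M.Infinite := by
      intro hfin
      have : ∀ k, ((st k).1.1 : Finset ℕ) ⊆ hfin.toFinset := by
        intro k x hx
        rw [Set.Finite.mem_toFinset]
        exact Set.mem_iUnion.mpr ⟨k, hx⟩
      have h1 := Finset.card_le_card (this (hfin.toFinset.card + 1))
      have h2 := hcard (hfin.toFinset.card + 1)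
      omega
    refine ⟨M, hMM₀, hMinf, ?_⟩
    intro t ht htF
    have : ∀ x ∈ t, ∃ k, x ∈ (st k).1.1 := by
      intro x hx
      obtain ⟨s, ⟨k, rfl⟩, hxs⟩ := ht hx
      exact ⟨k, hxs⟩
    choose κ hκ using this
    set κ' : ℕ → ℕ := fun x => if h : x ∈ t then κ x h else 0 with hκ'def
    have htsub : t ∈ ((st (t.sup κ')).1.1).powerset := by
      rw [Finset.mem_powerset]
      intro x hx
      refine hDsub ?_ (hκ x hx)
      have h1 : κ x hx = κ' x := by simp [hκ'def, hx]
      rw [h1]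
      exact Finset.le_sup (f := κ') hx
    have hrt := (st _).2.2.2.2.2 t htsub
    exact hrt _ subset_rfl (st _).2.1 (accepts_of_mem htF)


variable {Z : Type*}

/-- `z` realizes the alternating pattern along the list `L`. -/
def Realize (u : ℕ → Z → ℝ) (a b : ℝ) (z : Z) (L : List ℕ) : Prop :=
  ∀ (i : ℕ) (h : i < L.length),
    if Even i then u (L.get ⟨i, h⟩) z < a else b < u (L.get ⟨i, h⟩) z

def FF (u : ℕ → Z → ℝ) (a b : ℝ) : Set (Finset ℕ) :=
  {t | ¬ ∃ z, Realize u a b z (t.sort (· ≤ ·))}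

lemma sort_filter_card (t : Finset ℕ) (i : ℕ) (h : i < (t.sort (· ≤ ·)).length) :
    (t.filter (· < (t.sort (· ≤ ·)).get ⟨i, h⟩)).card = i := by
  classical
  set L := t.sort (· ≤ ·) with hL
  have hs : L.SortedLT := Finset.sortedLT_sort t
  have hnd : L.Nodup := Finset.sort_nodup t _
  have hsm := List.SortedLT.strictMono_get hs
  have key : t.filter (· < L.get ⟨i, h⟩) = (L.take i).toFinset := by
    ext y
    simp only [Finset.mem_filter, List.mem_toFinset]
    constructor
    · rintro ⟨hyt, hylt⟩
      have hyL : y ∈ L := by rw [hL, Finset.mem_sort]; exact hyt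
      obtain ⟨⟨j, hj⟩, hjy⟩ := List.mem_iff_get.mp hyL
      have : j < i := by
        have := hsm.lt_iff_lt (a := ⟨j, hj⟩) (b := ⟨i, h⟩)
        rw [hjy] at this
        exact this.mp hylt
      rw [← hjy]
      rw [List.get_eq_getElem]
      exact List.mem_take_iff_getElem.mpr ⟨j, by omega, by simp⟩
    · intro hy
      obtain ⟨j, hj, hjy⟩ := List.mem_take_iff_getElem.mp hy
      have hjL : j < L.length := by omega
      constructor
      · rw [← Finset.mem_sort (· ≤ ·), ← hL, ← hjy]
        exact List.getElem_mem _
      · rw [← hjy]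
        have := hsm (a := ⟨j, hjL⟩) (b := ⟨i, h⟩) (by simp only [Fin.mk_lt_mk]; omega)
        simpa [List.get_eq_getElem] using this
  rw [key]
  rw [List.toFinset_card_of_nodup ((List.take_sublist i L).nodup hnd)]
  rw [List.length_take]
  omega

lemma isInit_get {t : Finset ℕ} {w : ℕ → ℕ} (hw : StrictMono w)
    (hinit : IsInit t (Set.range w)) (i : ℕ) (h : i < (t.sort (· ≤ ·)).length) :
    (t.sort (· ≤ ·)).get ⟨i, h⟩ = w i := by
  classical
  set n := (t.sort (· ≤ ·)).get ⟨i, h⟩ with hn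
  have hnt : n ∈ t := by
    rw [← Finset.mem_sort (· ≤ ·), hn]
    exact List.get_mem _ _
  obtain ⟨j, hj⟩ := hinit.1 hnt
  have himg : t.filter (· < n) = Finset.image w (Finset.range j) := by
    ext y
    simp only [Finset.mem_filter, Finset.mem_image, Finset.mem_range]
    constructor
    · rintro ⟨hyt, hylt⟩
      obtain ⟨j', hj'⟩ := hinit.1 hyt
      refine ⟨j', ?_, hj'⟩
      rw [← hj', ← hj] at hylt
      exact hw.lt_iff_lt.mp hylt
    · rintro ⟨j', hj'lt, rfl⟩
      have hwj' : w j' < n := by rw [← hj]; exact hw hj'lt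
      exact ⟨hinit.2 (w j') ⟨j', rfl⟩ n hnt (le_of_lt hwj'), hwj'⟩
  have hcard := sort_filter_card t i h
  rw [← hn, himg, Finset.card_image_of_injective _ hw.injective, Finset.card_range] at hcard
  rw [← hj, hcard]

/-- padding construction for indices -/
def buildIdx (P : Finset ℕ) : List ℕ → Bool → List ℕ
  | [], _ => []
  | k :: rest, p =>
    if decide (k ∈ P) = p then (3*k+2) :: buildIdx P rest (!p)
    else (3*k) :: (3*k+2) :: buildIdx P rest p

lemma mem_buildIdx {P : Finset ℕ} : ∀ {ks : List ℕ} {p : Bool} {j : ℕ},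
    j ∈ buildIdx P ks p → ∃ k ∈ ks, 3*k ≤ j ∧ j ≤ 3*k+2 := by
  intro ks
  induction ks with
  | nil => intro p j hj; simp [buildIdx] at hj
  | cons k rest ih =>
    intro p j hj
    rw [buildIdx] at hj
    split at hj
    · rcases List.mem_cons.mp hj with rfl | hj
      · exact ⟨k, by simp, by omega, by omega⟩
      · obtain ⟨k', h1, h2⟩ := ih hj
        exact ⟨k', by simp [h1], h2⟩
    · rcases List.mem_cons.mp hj with rfl | hj
      · exact ⟨k, by simp, by omega, by omega⟩
      · rcases List.mem_cons.mp hj with rfl | hj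
        · exact ⟨k, by simp, by omega, by omega⟩
        · obtain ⟨k', h1, h2⟩ := ih hj
          exact ⟨k', by simp [h1], h2⟩

lemma pairwise_buildIdx {P : Finset ℕ} : ∀ {ks : List ℕ} {p : Bool},
    List.Pairwise (· < ·) ks → List.Pairwise (· < ·) (buildIdx P ks p) := by
  intro ks
  induction ks with
  | nil => intro p _; simp [buildIdx]
  | cons k rest ih =>
    intro p hp
    have hk : ∀ k' ∈ rest, k < k' := fun k' h => (List.pairwise_cons.mp hp).1 k' h
    have hrest := ih (p := !p) (List.pairwise_cons.mp hp).2
    have hrest' := ih (p := p) (List.pairwise_cons.mp hp).2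
    have hbig : ∀ q : Bool, ∀ j ∈ buildIdx P rest q, 3*k+2 < j := by
      intro q j hj
      obtain ⟨k', hk', h1, _⟩ := mem_buildIdx hj
      have := hk k' hk'
      omega
    rw [buildIdx]
    split
    · exact List.pairwise_cons.mpr ⟨hbig _, hrest⟩
    · refine List.pairwise_cons.mpr ⟨?_, List.pairwise_cons.mpr ⟨hbig _, hrest'⟩⟩
      intro j hj
      rcases List.mem_cons.mp hj with rfl | hj
      · omega
      · have := hbig _ j hj; omega

lemma buildIdx_pos {P : Finset ℕ} : ∀ {ks : List ℕ} {p : Bool} {k : ℕ}, k ∈ ks →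
    ∃ (i : ℕ) (h : i < (buildIdx P ks p).length),
      (buildIdx P ks p).get ⟨i, h⟩ = 3*k+2 ∧ (Even i ↔ (decide (k ∈ P) = p)) := by
  intro ks
  induction ks with
  | nil => intro p k hk; simp at hk
  | cons k₁ rest ih =>
    intro p k hk
    by_cases hd : decide (k₁ ∈ P) = p
    · rw [buildIdx, if_pos hd]
      rcases List.mem_cons.mp hk with rfl | hk
      · exact ⟨0, by simp, by simp, by simp [hd]⟩
      · obtain ⟨i, hlen, hget, hpar⟩ := ih (p := !p) hk
        refine ⟨i+1, by simpa using Nat.succ_lt_succ hlen, ?_, ?_⟩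
        · simpa using hget
        · rw [Nat.even_add_one, hpar]
          cases p <;> simp
    · rw [buildIdx, if_neg hd]
      rcases List.mem_cons.mp hk with rfl | hk
      · refine ⟨1, by simp, by simp, ?_⟩
        constructor
        · intro h; exact absurd h (by simp [Nat.even_iff])
        · intro hc; exact absurd hc hd
      · obtain ⟨i, hlen, hget, hpar⟩ := ih (p := p) hk
        refine ⟨i+2, by simp only [List.length_cons]; omega, ?_, ?_⟩
        · simpa using hget
        · rw [show i+2 = i+1+1 from rfl, Nat.even_add_one, Nat.even_add_one]
          rw [not_not, hpar]

lemma hornA_conv {u : ℕ → Z → ℝ} {a b : ℝ} {M : Set ℕ}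
    (hA : ∀ N, N ⊆ M → N.Infinite → ∃ t, IsInit t N ∧ t ∈ FF u a b) (x : Z) :
    ¬ ({n ∈ M | u n x < a}.Infinite ∧ {n ∈ M | b < u n x}.Infinite) := by
  rintro ⟨hI, hJ⟩
  obtain ⟨w, hw, hwmem⟩ := exists_seq_mem
    (fun r => if Even r then {n ∈ M | u n x < a} else {n ∈ M | b < u n x})
    (fun r => by by_cases h : Even r <;> simp [h, hI, hJ])
  have hrange : Set.range w ⊆ M := by
    rintro _ ⟨r, rfl⟩
    have := hwmem r
    by_cases h : Even r <;> simp [h, Set.mem_setOf_eq] at this <;> exact this.1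
  obtain ⟨t, hinit, htF⟩ := hA (Set.range w) hrange
    (Set.infinite_range_of_injective hw.injective)
  refine htF ⟨x, ?_⟩
  intro i h
  rw [isInit_get hw hinit i h]
  have := hwmem i
  by_cases he : Even i
  · rw [if_pos he]; simp [he, Set.mem_setOf_eq] at this; exact this.2
  · rw [if_neg he]; simp [he, Set.mem_setOf_eq] at this; exact this.2

lemma hornB_indep {u : ℕ → Z → ℝ} {a b : ℝ} {M : Set ℕ}
    (hB : ∀ t : Finset ℕ, ↑t ⊆ M → t ∉ FF u a b)
    (c : ℕ → ℕ) (hc : StrictMono c) (hcM : ∀ k, c k ∈ M)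
    (P Q : Finset ℕ) (hPQ : Disjoint P Q) :
    ∃ z : Z, (∀ k ∈ P, u (c (3*k+2)) z < a) ∧ (∀ k ∈ Q, b < u (c (3*k+2)) z) := by
  classical
  set ks := (P ∪ Q).sort (· ≤ ·) with hks
  set LI := buildIdx P ks true with hLI
  set L := LI.map c with hLdef
  have hLIsort : LI.Pairwise (· < ·) := pairwise_buildIdx (Finset.sortedLT_sort _).pairwise
  have hLsort : L.Pairwise (· < ·) := by
    rw [hLdef, List.pairwise_map]
    exact hLIsort.imp (fun h => hc h)
  have hLnodup : L.Nodup := hLsort.sortedLT.nodup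
  have hsortL : L.toFinset.sort (· ≤ ·) = L :=
    (List.toFinset_sort _ hLnodup).mpr (hLsort.imp le_of_lt)
  have hsub : ↑L.toFinset ⊆ M := by
    intro x hx
    rw [Finset.mem_coe, List.mem_toFinset] at hx
    obtain ⟨j, hj, rfl⟩ := List.mem_map.mp hx
    exact hcM j
  have hnF := hB L.toFinset hsub
  simp only [FF, Set.mem_setOf_eq, not_not] at hnF
  obtain ⟨z, hz⟩ := hnF
  rw [hsortL] at hz
  have key : ∀ k ∈ P ∪ Q, (k ∈ P → u (c (3*k+2)) z < a) ∧ (k ∉ P → b < u (c (3*k+2)) z) := by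
    intro k hk
    obtain ⟨i, hlen, hget, hpar⟩ := buildIdx_pos (P := P) (ks := ks) (p := true)
      ((Finset.mem_sort _).mpr hk)
    have hlen' : i < L.length := by simpa [hLdef] using hlen
    have hget' : LI[i]'hlen = 3*k+2 := by
      rw [List.get_eq_getElem] at hget; exact hget
    have hgetL : L.get ⟨i, hlen'⟩ = c (3*k+2) := by
      simp only [List.get_eq_getElem, hLdef, List.getElem_map, hget']
    have hzi := hz i hlen'
    constructor
    · intro hkP
      have heven : Even i := hpar.mpr (by simpa using hkP)
      rw [if_pos heven, hgetL] at hzi; exact hzi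
    · intro hkP
      have hodd : ¬ Even i := fun he => hkP (of_decide_eq_true (hpar.mp he))
      rw [if_neg hodd, hgetL] at hzi; exact hzi
  exact ⟨z, fun k hk => (key k (Finset.mem_union_left _ hk)).1 hk,
    fun k hk => (key k (Finset.mem_union_right _ hk)).2 (Finset.disjoint_right.mp hPQ hk)⟩

open Filter in
/-- convergence-type property of the family `u` along `M` -/
def Conv (u : ℕ → Z → ℝ) (a b : ℝ) (M : Set ℕ) : Prop :=
  ∀ x : Z, ¬ ({n ∈ M | u n x < a}.Infinite ∧ {n ∈ M | b < u n x}.Infinite)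

lemma infinite_of_sub_union {A B K : Set ℕ} (h : A ⊆ B ∪ K) (hA : A.Infinite)
    (hK : K.Finite) : B.Infinite :=
  (hA.diff hK).mono (fun x hx => (h hx.1).resolve_right hx.2)

lemma conv_transfer {u : ℕ → Z → ℝ} {a b : ℝ} {M M' K : Set ℕ}
    (hc : Conv u a b M) (hK : K.Finite) (h : M' ⊆ M ∪ K) : Conv u a b M' := by
  intro x hx
  refine hc x ⟨?_, ?_⟩
  · refine infinite_of_sub_union (B := {n ∈ M | u n x < a}) (K := K) ?_ hx.1 hK
    rintro n ⟨hn, hlt⟩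
    rcases h hn with hM | hKn
    · exact Or.inl ⟨hM, hlt⟩
    · exact Or.inr hKn
  · refine infinite_of_sub_union (B := {n ∈ M | b < u n x}) (K := K) ?_ hx.2 hK
    rintro n ⟨hn, hlt⟩
    rcases h hn with hM | hKn
    · exact Or.inl ⟨hM, hlt⟩
    · exact Or.inr hKn

/-- one step: given no independent subfamily, shrink to make `Conv` hold for one pair -/
lemma step_pair {u : ℕ → Z → ℝ}
    (hno : ∀ c : ℕ → ℕ, StrictMono c → ∀ a b : ℝ, a < b →
      ¬ ∀ P Q : Finset ℕ, Disjoint P Q →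
        ∃ z : Z, (∀ k ∈ P, u (c k) z < a) ∧ (∀ k ∈ Q, b < u (c k) z))
    (a b : ℚ) (M₀ : Set ℕ) (hM₀ : M₀.Infinite) :
    ∃ M, M ⊆ M₀ ∧ M.Infinite ∧ ((a:ℝ) < (b:ℝ) → Conv u a b M) := by
  by_cases hab : (a:ℝ) < (b:ℝ)
  · rcases dichotomy (FF u a b) M₀ hM₀ with ⟨M, h1, h2, h3⟩ | ⟨M, h1, h2, h3⟩
    · exact ⟨M, h1, h2, fun _ x => hornA_conv h3 x⟩
    · exfalso
      obtain ⟨c, hc, hcM⟩ := exists_seq_mem (fun _ => M) (fun _ => h2)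
      refine hno (fun k => c (3*k+2)) (fun i j hij => hc (by omega)) (a:ℝ) (b:ℝ) hab ?_
      intro P Q hPQ
      obtain ⟨z, hz1, hz2⟩ := hornB_indep h3 c hc hcM P Q hPQ
      exact ⟨z, hz1, hz2⟩
  · exact ⟨M₀, subset_rfl, hM₀, fun h => absurd h hab⟩

/-- diagonalization over all rational pairs -/
lemma diagonal {u : ℕ → Z → ℝ}
    (hno : ∀ c : ℕ → ℕ, StrictMono c → ∀ a b : ℝ, a < b →
      ¬ ∀ P Q : Finset ℕ, Disjoint P Q →
        ∃ z : Z, (∀ k ∈ P, u (c k) z < a) ∧ (∀ k ∈ Q, b < u (c k) z)) :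
    ∃ m : ℕ → ℕ, StrictMono m ∧ ∀ a b : ℚ, (a:ℝ) < (b:ℝ) →
      Conv u a b (Set.range m) := by
  classical
  obtain ⟨pe, hpe⟩ := exists_surjective_nat (ℚ × ℚ)
  have hspec : ∀ (k : ℕ) (st : {P : Set ℕ // P.Infinite}),
      ∃ q : {P : Set ℕ // P.Infinite} × ℕ,
        (q.1 : Set ℕ) ⊆ st.1 ∧ q.2 ∈ st.1 ∧ (∀ x ∈ q.1.1, q.2 < x) ∧
          (((pe k).1 : ℝ) < ((pe k).2 : ℝ) →
            Conv u (pe k).1 (pe k).2 (insert q.2 q.1.1)) := by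
    rintro k ⟨P, hP⟩
    obtain ⟨M, hM1, hM2, hM3⟩ := step_pair hno (pe k).1 (pe k).2 P hP
    obtain ⟨n₀, hn₀, hn₀min⟩ := nat_set_min hM2.nonempty
    refine ⟨(⟨{x ∈ M | n₀ < x}, infinite_above hM2 n₀⟩, n₀),
      fun x hx => hM1 hx.1, hM1 hn₀, fun x hx => hx.2, ?_⟩
    intro hab x hx
    refine hM3 hab x ⟨?_, ?_⟩
    · refine hx.1.mono ?_
      rintro n ⟨hn, hlt⟩
      rcases Set.mem_insert_iff.mp hn with rfl | hn
      · exact ⟨hn₀, hlt⟩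
      · exact ⟨hn.1, hlt⟩
    · refine hx.2.mono ?_
      rintro n ⟨hn, hlt⟩
      rcases Set.mem_insert_iff.mp hn with rfl | hn
      · exact ⟨hn₀, hlt⟩
      · exact ⟨hn.1, hlt⟩
  choose next h1 h2 h3 h4 using hspec
  set st : ℕ → {P : Set ℕ // P.Infinite} :=
    fun k => Nat.rec ⟨Set.univ, Set.infinite_univ⟩ (fun j p => (next j p).1) k with hstdef
  set m : ℕ → ℕ := fun k => (next k (st k)).2 with hmdef
  have hsucc : ∀ k, (st (k+1)).1 ⊆ (st k).1 := fun k => h1 k (st k)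
  have hmono : ∀ {j k : ℕ}, k ≤ j → (st j).1 ⊆ (st k).1 := by
    intro j k h
    induction j with
    | zero => cases Nat.le_zero.mp h; exact subset_rfl
    | succ j ih =>
      rcases Nat.lt_or_ge k (j+1) with hlt | hge
      · exact (hsucc j).trans (ih (Nat.lt_succ_iff.mp hlt))
      · cases le_antisymm h hge; exact subset_rfl
  have hmem : ∀ k, m k ∈ (st k).1 := fun k => h2 k (st k)
  have hmlt : ∀ k, ∀ x ∈ (st (k+1)).1, m k < x := fun k => h3 k (st k)
  have hm : StrictMono m := by
    apply strictMono_nat_of_lt_succ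
    intro k
    exact hmlt k _ (hmem (k+1))
  refine ⟨m, hm, ?_⟩
  intro a b hab
  obtain ⟨k, hk⟩ := hpe (a, b)
  have hconv : Conv u a b (insert (m k) (st (k+1)).1) := by
    have := h4 k (st k)
    rw [hk] at this
    exact this hab
  refine conv_transfer hconv ((Set.finite_Iio k).image m) ?_
  rintro _ ⟨j, rfl⟩
  rcases Nat.lt_or_ge j k with hjk | hjk
  · exact Or.inr ⟨j, hjk, rfl⟩
  · rcases Nat.eq_or_lt_of_le hjk with rfl | hjk
    · exact Or.inl (Set.mem_insert _ _)
    · exact Or.inl (Set.mem_insert_of_mem _ (hmono hjk (hmem j)))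

open Filter Topology in
/-- stability (Cauchy-type property) at every point -/
lemma stability {u : ℕ → Z → ℝ} {m : ℕ → ℕ} (hm : StrictMono m)
    (C : ℝ) (hb : ∀ n (x : Z), |u n x| ≤ C)
    (hconv : ∀ a b : ℚ, (a:ℝ) < (b:ℝ) → Conv u a b (Set.range m))
    (x : Z) (q : ℝ) (hq : 0 < q) :
    ∃ K, ∀ k, K ≤ k → |u (m k) x - u (m K) x| ≤ q := by
  set v : ℕ → ℝ := fun k => u (m k) x with hv
  have hba : IsBoundedUnder (· ≤ ·) atTop v :=
    ⟨C, eventually_map.mpr (Eventually.of_forall (fun k => (abs_le.mp (hb _ x)).2))⟩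
  have hbb : IsBoundedUnder (· ≥ ·) atTop v :=
    ⟨-C, eventually_map.mpr (Eventually.of_forall (fun k => (abs_le.mp (hb _ x)).1))⟩
  rcases eq_or_lt_of_le (liminf_le_limsup hba hbb) with heq | hlt
  · have ht : Tendsto v atTop (𝓝 (limsup v atTop)) :=
      tendsto_of_liminf_eq_limsup heq rfl hba hbb
    have := (Metric.tendsto_atTop.mp ht) (q/2) (by linarith)
    obtain ⟨K, hK⟩ := this
    refine ⟨K, fun k hk => ?_⟩
    have h1 := hK k hk
    have h2 := hK K le_rfl
    rw [Real.dist_eq] at h1 h2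
    have : |v k - v K| ≤ q := by
      calc |v k - v K| ≤ |v k - limsup v atTop| + |limsup v atTop - v K| := abs_sub_le _ _ _
        _ ≤ q/2 + q/2 := by
            rw [abs_sub_comm (limsup v atTop) (v K)]
            exact add_le_add (le_of_lt h1) (le_of_lt h2)
        _ = q := by ring
    exact this
  · exfalso
    obtain ⟨a, ha1, ha2⟩ := exists_rat_btwn hlt
    obtain ⟨b, hb1, hb2⟩ := exists_rat_btwn ha2
    have hfr1 : ∃ᶠ k in atTop, v k < (a:ℝ) :=
      frequently_lt_of_liminf_lt hba.isCoboundedUnder_ge ha1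
    have hfr2 : ∃ᶠ k in atTop, (b:ℝ) < v k :=
      frequently_lt_of_lt_limsup hbb.isCoboundedUnder_le hb2
    have hinf1 : {k | v k < (a:ℝ)}.Infinite := Nat.frequently_atTop_iff_infinite.mp hfr1
    have hinf2 : {k | (b:ℝ) < v k}.Infinite := Nat.frequently_atTop_iff_infinite.mp hfr2
    refine hconv a b hb1 x ⟨?_, ?_⟩
    · refine (hinf1.image (hm.injective.injOn)).mono ?_
      rintro _ ⟨k, hk, rfl⟩
      exact ⟨⟨k, rfl⟩, hk⟩
    · refine (hinf2.image (hm.injective.injOn)).mono ?_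
      rintro _ ⟨k, hk, rfl⟩
      exact ⟨⟨k, rfl⟩, hk⟩

lemma floor_cell {α β qr : ℝ} (hq : 0 < qr) (h : ⌊α/qr⌋ = ⌊β/qr⌋) : |α - β| < qr := by
  have h1 := Int.floor_le (α/qr)
  have h2 := Int.lt_floor_add_one (α/qr)
  have h3 := Int.floor_le (β/qr)
  have h4 := Int.lt_floor_add_one (β/qr)
  rw [h] at h1 h2
  set n := ⌊β/qr⌋
  have e1 : α < (n+1) * qr := by
    have := (div_lt_iff₀ hq).mp h2
    push_cast at this ⊢
    linarith
  have e2 : (n:ℝ) * qr ≤ α := (le_div_iff₀ hq).mp h1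
  have e3 : β < (n+1) * qr := by
    have := (div_lt_iff₀ hq).mp h4
    push_cast at this ⊢
    linarith
  have e4 : (n:ℝ) * qr ≤ β := (le_div_iff₀ hq).mp h3
  rw [abs_sub_lt_iff]
  constructor <;> nlinarith [e2, e1, e3, e4]

lemma separable {u : ℕ → Z → ℝ} {m : ℕ → ℕ}
    (hstab : ∀ (x : Z) (q : ℚ), 0 < q →
      ∃ K, ∀ k, K ≤ k → |u (m k) x - u (m K) x| ≤ (q:ℝ)) :
    ∃ D : Set Z, D.Countable ∧ ∀ (x : Z) (ε : ℝ), 0 < ε →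
      ∃ y ∈ D, ∀ k, |u (m k) x - u (m k) y| ≤ ε := by
  classical
  set I := ℚ × (Σ K : ℕ, (Fin (K+1) → ℤ)) with hI
  set CellP : I → Z → Prop := fun i x =>
    (∀ k, i.2.1 ≤ k → |u (m k) x - u (m i.2.1) x| ≤ (i.1:ℝ)) ∧
    ∀ j : Fin (i.2.1+1), ⌊u (m (j:ℕ)) x / (i.1:ℝ)⌋ = i.2.2 j with hCellP
  set D : Set Z := Set.range (fun p : {i : I // ∃ x, CellP i x} => Classical.choose p.2)
    with hD
  refine ⟨D, Set.countable_range _, ?_⟩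
  intro x ε hε
  obtain ⟨q, hq0, hqε⟩ := exists_rat_btwn (show (0:ℝ) < ε/3 by linarith)
  have hq0' : 0 < q := by exact_mod_cast hq0
  obtain ⟨K, hK⟩ := hstab x q hq0'
  set i : I := ⟨q, ⟨K, fun j => ⌊u (m (j:ℕ)) x / (q:ℝ)⌋⟩⟩ with hidef
  have hx : CellP i x := ⟨hK, fun j => rfl⟩
  have hex : ∃ z, CellP i z := ⟨x, hx⟩
  set y := Classical.choose hex with hy
  have hcy : CellP i y := Classical.choose_spec hex
  refine ⟨y, ⟨⟨i, hex⟩, rfl⟩, ?_⟩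
  have hcell : ∀ k, k ≤ K → |u (m k) x - u (m k) y| < (q:ℝ) := by
    intro k hk
    have hj : k < K + 1 := by omega
    have h1 := hx.2 ⟨k, hj⟩
    have h2 := hcy.2 ⟨k, hj⟩
    exact floor_cell hq0 (h1.trans h2.symm)
  intro k
  rcases le_or_gt k K with hk | hk
  · exact le_of_lt (lt_of_lt_of_le (hcell k hk) (by linarith))
  · have e1 := hx.1 k (le_of_lt hk)
    have e2 := hcy.1 k (le_of_lt hk)
    have e3 := hcell K le_rfl
    calc |u (m k) x - u (m k) y|
        ≤ |u (m k) x - u (m K) x| + |u (m K) x - u (m k) y| := abs_sub_le _ _ _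
      _ ≤ |u (m k) x - u (m K) x| + (|u (m K) x - u (m K) y| + |u (m K) y - u (m k) y|) := by
          have := abs_sub_le (u (m K) x) (u (m K) y) (u (m k) y)
          linarith
      _ ≤ (q:ℝ) + ((q:ℝ) + (q:ℝ)) := by
          have e2' : |u (m K) y - u (m k) y| ≤ (q:ℝ) := by
            rw [abs_sub_comm]; exact e2
          have e3' := le_of_lt e3
          linarith
      _ ≤ ε := by linarith

end GPX

theorem stmt3 {S X : Type*} [Monoid S] [TopologicalSpace X] [CompactSpace X]
    [MulAction S X] (hcont : ∀ s : S, Continuous fun x : X => s • x)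
    (f : X → ℝ) (hf : Continuous f) :
    -- `fS` contains no independent sequence ↔
    (¬ ∃ s : ℕ → S, IsIndependentSeq fun n (x : X) => f (s n • x)) ↔
      -- for every countably infinite `A ⊆ S` there is a countably infinite `A' ⊆ A`
      -- such that the pseudometric `ρ_{f,A'}(x,y) = sup_{g ∈ A'} |f(g•x) - f(g•y)|`
      -- on `X` is separable
      (∀ A : Set S, A.Countable → A.Infinite →
        ∃ A' ⊆ A, A'.Countable ∧ A'.Infinite ∧
          ∃ D : Set X, D.Countable ∧ ∀ x : X, ∀ ε : ℝ, 0 < ε →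
            ∃ y ∈ D, ∀ g ∈ A', |f (g • x) - f (g • y)| ≤ ε) := by
  classical
  constructor
  · -- forward direction
    intro hno A hAc hAi
    haveI := hAc.to_subtype
    haveI := hAi.to_subtype
    obtain ⟨den⟩ := nonempty_denumerable (↥A)
    set e : ℕ → S := fun n => ((Denumerable.eqv (↥A)).symm n : ↥A).1 with hedef
    have heinj : Function.Injective e :=
      fun n1 n2 h => (Equiv.injective _) (Subtype.val_injective h)
    have heA : ∀ n, e n ∈ A := fun n => ((Denumerable.eqv (↥A)).symm n).2
    rcases isEmpty_or_nonempty X with hX | hX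
    · refine ⟨A, subset_rfl, hAc, hAi, ∅, Set.countable_empty, ?_⟩
      intro x
      exact (IsEmpty.false x).elim
    · -- a uniform bound for f
      obtain ⟨z₀, -, hz₀⟩ := IsCompact.exists_isMaxOn (isCompact_univ (X := X))
        ⟨Classical.arbitrary X, trivial⟩ ((hf.abs).continuousOn)
      set C : ℝ := |f z₀| with hC
      set u : ℕ → X → ℝ := fun n x => f (e n • x) with hu
      have hbC : ∀ n (x : X), |u n x| ≤ C := fun n x => hz₀ (Set.mem_univ (e n • x))
      have hno' : ∀ c : ℕ → ℕ, StrictMono c → ∀ a b : ℝ, a < b →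
          ¬ ∀ P Q : Finset ℕ, Disjoint P Q →
            ∃ z : X, (∀ k ∈ P, u (c k) z < a) ∧ (∀ k ∈ Q, b < u (c k) z) := by
        intro c hc a b hab hall
        refine hno ⟨fun k => e (c k), a, b, hab, ?_⟩
        intro P M hd
        obtain ⟨z, hz1, hz2⟩ := hall P M hd
        refine ⟨z, ?_, ?_⟩
        · simp only [Set.mem_iInter, Set.mem_setOf_eq]
          intro n hn
          exact hz1 n hn
        · simp only [Set.mem_iInter, Set.mem_setOf_eq]
          intro n hn
          exact hz2 n hn
      obtain ⟨m, hm, hconv⟩ := GPX.diagonal hno'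
      have hstab : ∀ (x : X) (q : ℚ), 0 < q →
          ∃ K, ∀ k, K ≤ k → |u (m k) x - u (m K) x| ≤ (q:ℝ) := by
        intro x q hq
        exact GPX.stability hm C hbC hconv x (q:ℝ) (by exact_mod_cast hq)
      obtain ⟨D, hDc, hDapp⟩ := GPX.separable hstab
      refine ⟨Set.range (fun k => e (m k)), ?_, Set.countable_range _,
        Set.infinite_range_of_injective (heinj.comp hm.injective), D, hDc, ?_⟩
      · rintro _ ⟨k, rfl⟩
        exact heA (m k)
      · intro x ε hε
        obtain ⟨y, hyD, hy⟩ := hDapp x ε hε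
        refine ⟨y, hyD, ?_⟩
        rintro _ ⟨k, rfl⟩
        exact hy k
  · -- converse direction
    rintro hRHS ⟨σ, a, b, hab, hind⟩
    have hσinj : Function.Injective σ := by
      intro n1 n2 h12
      by_contra hne
      obtain ⟨z, hz1, hz2⟩ := hind {n1} {n2} (by simp [hne])
      simp only [Finset.mem_singleton, Set.iInter_iInter_eq_left, Set.mem_setOf_eq] at hz1 hz2
      rw [h12] at hz1
      linarith
    obtain ⟨A', hA'sub, hA'c, hA'inf, D, hDc, happrox⟩ :=
      hRHS (Set.range σ) (Set.countable_range σ) (Set.infinite_range_of_injective hσinj)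
    set N₀ : Set ℕ := {n | σ n ∈ A'} with hN₀def
    have hN₀ : N₀.Infinite := by
      intro hfin
      have hsub : A' ⊆ σ '' N₀ := by
        rintro y hy
        obtain ⟨n, rfl⟩ := hA'sub hy
        exact ⟨n, hy, rfl⟩
      exact hA'inf ((hfin.image σ).subset hsub)
    obtain ⟨w, hw, hwN⟩ := GPX.exists_seq_mem (fun _ => N₀) (fun _ => hN₀)
    have hXpt : ∀ h : ℕ → Bool, ∃ x : X, ∀ k,
        if h k then b ≤ f (σ (w k) • x) else f (σ (w k) • x) ≤ a := by
      intro h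
      set Cs : ℕ → Set X := fun k =>
        if h k then {x | b ≤ f (σ (w k) • x)} else {x | f (σ (w k) • x) ≤ a} with hCs
      have hCclosed : ∀ k, IsClosed (Cs k) := by
        intro k
        have hcont' : Continuous fun x : X => f (σ (w k) • x) := hf.comp (hcont _)
        by_cases hk : h k
        · simp only [hCs, hk, if_true]
          exact isClosed_le continuous_const hcont'
        · simp only [hCs, hk, if_false]
          exact isClosed_le hcont' continuous_const
      set Zc : Finset ℕ → Set X := fun F => ⋂ k ∈ F, Cs k with hZc
      have hZclosed : ∀ F, IsClosed (Zc F) := fun F =>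
        isClosed_biInter (fun k _ => hCclosed k)
      have hZne : ∀ F, (Zc F).Nonempty := by
        intro F
        have hdisj : Disjoint ((F.filter (fun k => ¬ (h k = true))).image w)
            ((F.filter (fun k => h k = true)).image w) := by
          rw [Finset.disjoint_left]
          rintro x hx1 hx2
          obtain ⟨k1, hk1, rfl⟩ := Finset.mem_image.mp hx1
          obtain ⟨k2, hk2, heq2⟩ := Finset.mem_image.mp hx2
          have : k2 = k1 := hw.injective heq2
          subst this
          exact (Finset.mem_filter.mp hk1).2 (Finset.mem_filter.mp hk2).2
        obtain ⟨z, hz1, hz2⟩ := hind _ _ hdisj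
        refine ⟨z, ?_⟩
        simp only [hZc, Set.mem_iInter]
        intro k hk
        simp only [Set.mem_iInter, Set.mem_setOf_eq] at hz1 hz2
        by_cases hhk : h k = true
        · have hCk : Cs k = {x | b ≤ f (σ (w k) • x)} := by
            simp only [hCs]; rw [if_pos hhk]
          rw [hCk]
          have := hz2 (w k) (Finset.mem_image.mpr ⟨k, Finset.mem_filter.mpr ⟨hk, hhk⟩, rfl⟩)
          exact le_of_lt this
        · have hCk : Cs k = {x | f (σ (w k) • x) ≤ a} := by
            simp only [hCs]; rw [if_neg hhk]
          rw [hCk]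
          have := hz1 (w k) (Finset.mem_image.mpr ⟨k,
            Finset.mem_filter.mpr ⟨hk, fun hc => hhk hc⟩, rfl⟩)
          exact le_of_lt this
      have hZdir : Directed (· ⊇ ·) Zc := by
        intro F G
        refine ⟨F ∪ G, ?_, ?_⟩
        · intro x hx
          simp only [hZc, Set.mem_iInter] at hx ⊢
          intro k hk
          exact hx k (Finset.mem_union_left _ hk)
        · intro x hx
          simp only [hZc, Set.mem_iInter] at hx ⊢
          intro k hk
          exact hx k (Finset.mem_union_right _ hk)
      obtain ⟨x, hx⟩ := IsCompact.nonempty_iInter_of_directed_nonempty_isCompact_isClosed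
        Zc hZdir hZne (fun F => (hZclosed F).isCompact) hZclosed
      refine ⟨x, ?_⟩
      intro k
      have hx' : x ∈ Zc {k} := Set.mem_iInter.mp hx {k}
      have : x ∈ Cs k := by
        simp only [hZc, Finset.mem_singleton, Set.mem_iInter] at hx'
        exact hx' k rfl
      by_cases hhk : h k = true
      · rw [if_pos hhk]
        have hCk : Cs k = {x | b ≤ f (σ (w k) • x)} := by
          simp only [hCs]; rw [if_pos hhk]
        rw [hCk] at this
        exact this
      · rw [if_neg hhk]
        have hCk : Cs k = {x | f (σ (w k) • x) ≤ a} := by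
          simp only [hCs]; rw [if_neg hhk]
        rw [hCk] at this
        exact this
    choose xh hxh using hXpt
    set ε : ℝ := (b - a)/3 with hεdef
    have hε : 0 < ε := by rw [hεdef]; linarith
    have hy : ∀ h : ℕ → Bool, ∃ y ∈ D, ∀ g ∈ A', |f (g • xh h) - f (g • y)| ≤ ε :=
      fun h => happrox (xh h) ε hε
    choose yh hyD hyapp using hy
    haveI : Countable ↥D := hDc.to_subtype
    set Φ : (ℕ → Bool) → ↥D := fun h => ⟨yh h, hyD h⟩ with hΦ
    have hnotinj : ¬ Function.Injective Φ := by
      intro hinj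
      haveI : Countable (ℕ → Bool) := hinj.countable
      obtain ⟨F, hF⟩ := exists_surjective_nat (ℕ → Bool)
      obtain ⟨n, hn⟩ := hF (fun j => !(F j j))
      have := congrFun hn n
      simp at this
    obtain ⟨h1, h2, hne, heq⟩ : ∃ h1 h2, h1 ≠ h2 ∧ Φ h1 = Φ h2 := by
      by_contra hc
      push_neg at hc
      exact hnotinj (fun a b hab => by
        by_contra hne
        exact hc a b hne hab)
    obtain ⟨k, hk⟩ : ∃ k, h1 k ≠ h2 k := by
      by_contra hc
      push_neg at hc
      exact hne (funext hc)
    have hgk : σ (w k) ∈ A' := hwN k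
    have e1 := hyapp h1 (σ (w k)) hgk
    have e2 := hyapp h2 (σ (w k)) hgk
    have hyy : yh h1 = yh h2 := congrArg Subtype.val heq
    rw [hyy] at e1
    have b1 := hxh h1 k
    have b2 := hxh h2 k
    have habs1 := abs_le.mp e1
    have habs2 := abs_le.mp e2
    cases hc1 : h1 k <;> cases hc2 : h2 k
    · exact hk (by rw [hc1, hc2])
    · rw [hc1, if_neg (by simp)] at b1
      rw [hc2, if_pos rfl] at b2
      have hε3 : ε = (b - a)/3 := hεdef
      linarith [habs1.1, habs1.2, habs2.1, habs2.2]
    · rw [hc1, if_pos rfl] at b1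
      rw [hc2, if_neg (by simp)] at b2
      linarith [habs1.1, habs1.2, habs2.1, habs2.2]
    · exact hk (by rw [hc1, hc2])
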